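/- Let f : ℕ → ℕ be nondecreasing with f(2^{n+1}) ≤ f(2^n)^2, and let h(n) count the factors of length at most n of the set of right-infinite words S = W(1)C(1)C(2)C(4)C(8)⋯ constructed from f as in the Smoktunowicz–Bartholdi construction. Then there exist constants C, D > 0 with f(n) ≤ h(2n) and h(n) ≤ C·n^3·f(D·n) for all n; moreover if f(2^k) divides f(2^{k+1}) for all k then h(n) ≤ C·n^2·f(D·n). -/

import Mathlib

lemma stmt8_ceil_lb (a b : ℕ) (ha : 0 < a) (hb : 0 < b) : a ≤ b * ((a + b - 1) / b) := by
  have e : a + b - 1 = (a - 1) + b := by omega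
  rw [e, Nat.add_div_right _ hb, Nat.mul_add, Nat.mul_one]
  have h2 := Nat.div_add_mod (a - 1) b
  have h1 := Nat.mod_lt (a - 1) hb
  set t := b * ((a - 1) / b) with ht
  set r := (a - 1) % b with hr
  omega

lemma stmt8_ceil_ub (a b : ℕ) (hba : b ≤ a) (hb : 0 < b) : b * ((a + b - 1) / b) ≤ 2 * a := by
  have h := Nat.div_mul_le_self (a + b - 1) b
  rw [Nat.mul_comm] at h
  set t := b * ((a + b - 1) / b) with ht
  omega

lemma stmt8_ceil_div (b q : ℕ) (hb : 0 < b) : (b * q + b - 1) / b = q := by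
  have e : b * q + b - 1 = b * q + (b - 1) := by omega
  rw [e, Nat.mul_add_div hb, Nat.div_eq_of_lt (by omega), Nat.add_zero]

lemma stmt8_ofFn_getD {α : Type*} (d : α) (L : ℕ) (l : List α) (hl : l.length = L) :
    List.ofFn (fun i : Fin L => l.getD i d) = l := by
  apply List.ext_getElem (by simp [hl])
  intro i h1 h2
  rw [List.getElem_ofFn]
  exact (List.getD_eq_getElem l d h2)

lemma stmt8_eq_ofFn {α : Type*} (d : α) (u : List α) (g : ℕ → α)
    (hg : ∀ i, i < u.length → u.getD i d = g i) :
    u = List.ofFn (fun i : Fin u.length => g i) := by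
  apply List.ext_getElem (by simp)
  intro i h1 h2
  rw [List.getElem_ofFn]
  have := hg i h1
  rw [List.getD_eq_getElem u d h1] at this
  simpa using this

lemma stmt8_getD_append_left {α : Type*} (d : α) (l₁ l₂ : List α) (i : ℕ) (h : i < l₁.length) :
    (l₁ ++ l₂).getD i d = l₁.getD i d := by
  rw [List.getD_eq_getElem _ _ (by simp; omega), List.getD_eq_getElem _ _ h]
  exact List.getElem_append_left h

lemma stmt8_getD_append_right {α : Type*} (d : α) (l₁ l₂ : List α) (i : ℕ)
    (h : l₁.length ≤ i) (h2 : i - l₁.length < l₂.length) :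
    (l₁ ++ l₂).getD i d = l₂.getD (i - l₁.length) d := by
  rw [List.getD_eq_getElem _ _ (by simp; omega), List.getD_eq_getElem _ _ h2]
  exact List.getElem_append_right h

lemma stmt8_clog_le (n : ℕ) (hn : 1 ≤ n) : 2 ^ (Nat.clog 2 n) ≤ 2 * n := by
  rcases eq_or_lt_of_le hn with h1 | h1
  · rw [← h1]; norm_num
  · have h2 : 2 ≤ n := h1
    have hp := Nat.pow_pred_clog_lt_self (b := 2) (by norm_num) h2
    have hpos := Nat.clog_pos (b := 2) (by norm_num) h2
    obtain ⟨k, hk⟩ : ∃ k, Nat.clog 2 n = k + 1 := ⟨Nat.clog 2 n - 1, by omega⟩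
    have hp' : 2 ^ k < n := by
      have : (Nat.clog 2 n).pred = k := by rw [hk, Nat.pred_succ]
      rwa [this] at hp
    have he : 2 ^ (Nat.clog 2 n) = 2 * 2 ^ k := by rw [hk, pow_succ]; ring
    omega

/-- growth of the factor-counting function of the set of right-infinite
words `S = W(1)C(1)C(2)C(4)⋯` from the Smoktunowicz–Bartholdi construction.
`W n`, `C n` play the roles of `W(2^n)`, `C(2^n)`; an infinite word `w` lies in `S`
iff its first letter (a length-1 word) lies in `W 0` and, for every `n`, the block of
`w` occupying positions `[2^n, 2^{n+1})` lies in `C n`. -/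
theorem stmt_8 (f : ℕ → ℕ) (hfmono : Monotone f)
    (hsq : ∀ n : ℕ, f (2 ^ (n + 1)) ≤ f (2 ^ n) ^ 2) (hf1 : 2 ≤ f 1)
    (W C : ℕ → Finset (List (Fin (f 1))))
    (hW0card : (W 0).card = f 1)
    (hW0len : ∀ w ∈ W 0, w.length = 1)
    (hCsub : ∀ n, C n ⊆ W n)
    (hCcard : ∀ n, (C n).card = (f (2 ^ (n + 1)) + f (2 ^ n) - 1) / f (2 ^ n))
    (hWsucc : ∀ n, W (n + 1) = ((W n) ×ˢ (C n)).image fun p => p.1 ++ p.2)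
    -- the set `S` of right-infinite words and its factors
    (S : Set (ℕ → Fin (f 1)))
    (hS : S = {w | ([w 0] ∈ W 0) ∧
      ∀ n : ℕ, (List.ofFn fun i : Fin (2 ^ n) => w (2 ^ n + i)) ∈ C n})
    (IsFactor : List (Fin (f 1)) → Prop)
    (hFac : ∀ u, IsFactor u ↔
      ∃ w ∈ S, ∃ k : ℕ, u = List.ofFn fun i : Fin u.length => w (k + i))
    -- the granted lemma: every factor of length `2^m` is a subword of a word in
    -- `W(2^m)C(2^m) ∪ C(2^m)W(2^m)`
    (hgranted : ∀ m : ℕ, ∀ u, IsFactor u → u.length = 2 ^ m →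
      ∃ a b : List (Fin (f 1)),
        ((a ∈ W m ∧ b ∈ C m) ∨ (a ∈ C m ∧ b ∈ W m)) ∧ u <:+: a ++ b)
    (h : ℕ → ℕ)
    (hh : ∀ n, h n = Set.ncard {u : List (Fin (f 1)) | u.length ≤ n ∧ IsFactor u}) :
    ∃ Cc D : ℕ, 0 < Cc ∧ 0 < D ∧
      (∀ n : ℕ, 1 ≤ n → f n ≤ h (2 * n) ∧ h n ≤ Cc * n ^ 3 * f (D * n)) ∧
      ((∀ k : ℕ, f (2 ^ k) ∣ f (2 ^ (k + 1))) →
        ∀ n : ℕ, 1 ≤ n → h n ≤ Cc * n ^ 2 * f (D * n)) := by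
  classical
  subst hS
  have hd0 : 0 < f 1 := by omega
  set d : Fin (f 1) := ⟨0, hd0⟩ with hd
  -- basic length facts
  have hlenW : ∀ n, ∀ w ∈ W n, w.length = 2 ^ n := by
    intro n
    induction n with
    | zero => intro w hw; simpa using hW0len w hw
    | succ n ih =>
      intro w hw
      rw [hWsucc] at hw
      obtain ⟨p, hp, rfl⟩ := Finset.mem_image.mp hw
      rw [Finset.mem_product] at hp
      have h1 := ih p.1 hp.1
      have h2 := ih p.2 (hCsub n hp.2)
      simp only [List.length_append, h1, h2, pow_succ]
      ring
  have hlenC : ∀ n, ∀ w ∈ C n, w.length = 2 ^ n := fun n w hw => hlenW n w (hCsub n hw)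
  have fpos : ∀ k, 0 < f (2 ^ k) := by
    intro k
    have := hfmono (Nat.one_le_two_pow (n := k))
    omega
  have fmono2 : ∀ k, f (2 ^ k) ≤ f (2 ^ (k + 1)) :=
    fun k => hfmono (Nat.pow_le_pow_right (by norm_num) (Nat.le_succ k))
  have hC_lb : ∀ n, f (2 ^ (n + 1)) ≤ f (2 ^ n) * (C n).card := by
    intro n
    rw [hCcard n]
    exact stmt8_ceil_lb _ _ (fpos (n + 1)) (fpos n)
  have hC_ub : ∀ n, f (2 ^ n) * (C n).card ≤ 2 * f (2 ^ (n + 1)) := by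
    intro n
    rw [hCcard n]
    exact stmt8_ceil_ub _ _ (fmono2 n) (fpos n)
  have hCpos : ∀ n, 0 < (C n).card := by
    intro n
    rcases Nat.eq_zero_or_pos (C n).card with h0 | h0
    · have h1 := hC_lb n
      rw [h0, Nat.mul_zero] at h1
      have := fpos (n + 1)
      omega
    · exact h0
  choose c hc using fun n => Finset.card_pos.mp (hCpos n)
  -- cardinalities of W
  have cardW_succ : ∀ n, (W (n + 1)).card = (W n).card * (C n).card := by
    intro n
    rw [hWsucc, Finset.card_image_of_injOn, Finset.card_product]
    intro p hp q hq hpq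
    simp only [Finset.coe_product, Set.mem_prod, Finset.mem_coe] at hp hq
    have := List.append_inj hpq (by rw [hlenW n _ hp.1, hlenW n _ hq.1])
    exact Prod.ext this.1 this.2
  have cardW_lb : ∀ n, f (2 ^ n) ≤ (W n).card := by
    intro n
    induction n with
    | zero => rw [hW0card]; simp
    | succ n ih =>
      calc f (2 ^ (n + 1)) ≤ f (2 ^ n) * (C n).card := hC_lb n
        _ ≤ (W n).card * (C n).card := Nat.mul_le_mul_right _ ih
        _ = (W (n + 1)).card := (cardW_succ n).symm
  have cardW_ub : ∀ n, (W n).card ≤ 2 ^ n * f (2 ^ n) := by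
    intro n
    induction n with
    | zero => rw [hW0card]; simp
    | succ n ih =>
      calc (W (n + 1)).card = (W n).card * (C n).card := cardW_succ n
        _ ≤ (2 ^ n * f (2 ^ n)) * (C n).card := Nat.mul_le_mul_right _ ih
        _ = 2 ^ n * (f (2 ^ n) * (C n).card) := by ring
        _ ≤ 2 ^ n * (2 * f (2 ^ (n + 1))) := Nat.mul_le_mul_left _ (hC_ub n)
        _ = 2 ^ (n + 1) * f (2 ^ (n + 1)) := by ring
  have cardW_div : (∀ k : ℕ, f (2 ^ k) ∣ f (2 ^ (k + 1))) → ∀ n, (W n).card = f (2 ^ n) := by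
    intro hdvd n
    induction n with
    | zero => rw [hW0card]; simp
    | succ n ih =>
      obtain ⟨q, hq⟩ := hdvd n
      have hCq : (C n).card = q := by
        rw [hCcard n, hq]
        exact stmt8_ceil_div _ _ (fpos n)
      rw [cardW_succ n, ih, hCq, ← hq]
  -- decomposition of elements of W n
  have decomp : ∀ n, ∀ v ∈ W n, ([v.getD 0 d] ∈ W 0) ∧
      (∀ k, k < n → (List.ofFn fun i : Fin (2 ^ k) => v.getD (2 ^ k + i) d) ∈ C k) := by
    intro n
    induction n with
    | zero =>
      intro v hv
      refine ⟨?_, fun k hk => absurd hk (Nat.not_lt_zero k)⟩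
      have hl := hW0len v hv
      have he : [v.getD 0 d] = v := by
        apply List.ext_getElem (by simp [hl])
        intro i h1 h2
        simp only [List.length_singleton] at h1
        have : i = 0 := by omega
        subst this
        simp only [List.getElem_cons_zero]
        exact List.getD_eq_getElem v d h2
      rw [he]; exact hv
    | succ n ih =>
      intro v hv
      rw [hWsucc] at hv
      obtain ⟨p, hp, rfl⟩ := Finset.mem_image.mp hv
      rw [Finset.mem_product] at hp
      obtain ⟨ha, hb⟩ := hp
      have hal := hlenW n _ ha
      have hbl := hlenC n _ hb
      have iha := ih p.1 ha
      have hpow : 0 < 2 ^ n := Nat.pow_pos (by norm_num)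
      constructor
      · rw [stmt8_getD_append_left d p.1 p.2 0 (by omega)]
        exact iha.1
      · intro k hk
        rcases Nat.lt_or_ge k n with hkn | hkn
        · have hkpow : 2 ^ (k + 1) ≤ 2 ^ n := Nat.pow_le_pow_right (by norm_num) hkn
          rw [pow_succ] at hkpow
          have he : (fun i : Fin (2 ^ k) => (p.1 ++ p.2).getD (2 ^ k + ↑i) d)
              = fun i : Fin (2 ^ k) => p.1.getD (2 ^ k + ↑i) d := by
            funext i
            have hilt : (i : ℕ) < 2 ^ k := i.isLt
            exact stmt8_getD_append_left d p.1 p.2 _ (by omega)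
          rw [he]
          exact iha.2 k hkn
        · have hk' : k = n := by omega
          subst hk'
          have he : (fun i : Fin (2 ^ k) => (p.1 ++ p.2).getD (2 ^ k + ↑i) d)
              = fun i : Fin (2 ^ k) => p.2.getD (↑i) d := by
            funext i
            have hilt : (i : ℕ) < 2 ^ k := i.isLt
            have := stmt8_getD_append_right d p.1 p.2 (2 ^ k + ↑i) (by omega) (by omega)
            rw [this]
            congr 1
            omega
          rw [he, stmt8_ofFn_getD d (2 ^ k) p.2 hbl]
          exact hb
  -- characterization of factors
  have fac_iff : ∀ u : List (Fin (f 1)), IsFactor u ↔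
      ∃ w ∈ {w : ℕ → Fin (f 1) | ([w 0] ∈ W 0) ∧
        ∀ n : ℕ, (List.ofFn fun i : Fin (2 ^ n) => w (2 ^ n + i)) ∈ C n},
        ∃ k : ℕ, ∀ i, i < u.length → u.getD i d = w (k + i) := by
    intro u
    rw [hFac u]
    constructor
    · rintro ⟨w, hw, k, hu⟩
      refine ⟨w, hw, k, ?_⟩
      intro i hi
      have h1 : i < (List.ofFn fun j : Fin u.length => w (k + ↑j)).length := by simpa using hi
      calc u.getD i d = (List.ofFn fun j : Fin u.length => w (k + ↑j)).getD i d := by rw [← hu]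
        _ = w (k + i) := by rw [List.getD_eq_getElem _ _ h1, List.getElem_ofFn]
    · rintro ⟨w, hw, k, hu⟩
      exact ⟨w, hw, k, stmt8_eq_ofFn d u (fun j => w (k + j)) hu⟩
  -- every element of W m is a factor
  have factor_W : ∀ m, ∀ v ∈ W m, IsFactor v := by
    intro m v hv
    obtain ⟨h0, hblk⟩ := decomp m v hv
    have hvl := hlenW m v hv
    set g : ℕ → Fin (f 1) := fun i =>
      if i < 2 ^ m then v.getD i d
      else (c (Nat.log 2 i)).getD (i - 2 ^ (Nat.log 2 i)) d with hg
    have hlog : ∀ k i : ℕ, i < 2 ^ k → Nat.log 2 (2 ^ k + i) = k := by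
      intro k i hik
      exact Nat.log_eq_of_pow_le_of_lt_pow (by omega) (by rw [pow_succ]; omega)
    have hgS : g ∈ {w : ℕ → Fin (f 1) | ([w 0] ∈ W 0) ∧
        ∀ n : ℕ, (List.ofFn fun i : Fin (2 ^ n) => w (2 ^ n + i)) ∈ C n} := by
      have hpow : 0 < 2 ^ m := Nat.pow_pos (by norm_num)
      constructor
      · have : g 0 = v.getD 0 d := by
          simp only [hg]
          rw [if_pos hpow]
        rw [this]; exact h0
      · intro k
        rcases Nat.lt_or_ge k m with hkm | hkm
        · have hkpow : 2 ^ (k + 1) ≤ 2 ^ m := Nat.pow_le_pow_right (by norm_num) hkm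
          rw [pow_succ] at hkpow
          have he : (fun i : Fin (2 ^ k) => g (2 ^ k + ↑i))
              = fun i : Fin (2 ^ k) => v.getD (2 ^ k + ↑i) d := by
            funext i
            have hilt : (i : ℕ) < 2 ^ k := i.isLt
            simp only [hg]
            rw [if_pos (by omega)]
          rw [he]
          exact hblk k hkm
        · have hkpow : 2 ^ m ≤ 2 ^ k := Nat.pow_le_pow_right (by norm_num) hkm
          have he : (fun i : Fin (2 ^ k) => g (2 ^ k + ↑i))
              = fun i : Fin (2 ^ k) => (c k).getD (↑i) d := by
            funext i
            have hilt : (i : ℕ) < 2 ^ k := i.isLt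
            simp only [hg]
            rw [if_neg (by omega), hlog k (↑i) hilt]
            congr 1
            omega
          rw [he, stmt8_ofFn_getD d (2 ^ k) (c k) (hlenC k (c k) (hc k))]
          exact hc k
    refine (fac_iff v).mpr ⟨g, hgS, 0, ?_⟩
    intro i hi
    rw [hvl] at hi
    simp only [hg, Nat.zero_add]
    rw [if_pos hi]
  -- the key counting bound
  have key : ∀ N, 1 ≤ N →
      {u : List (Fin (f 1)) | u.length ≤ N ∧ IsFactor u}.Finite ∧
      h N ≤ 2 * ((W (Nat.clog 2 N)).card * (C (Nat.clog 2 N)).card) *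
        ((2 ^ (Nat.clog 2 N + 1) + 1) * (N + 1)) := by
    intro N hN
    set m := Nat.clog 2 N with hm
    have hNm : N ≤ 2 ^ m := Nat.le_pow_clog (by norm_num) N
    set T : Finset (List (Fin (f 1)) × List (Fin (f 1))) :=
      (W m ×ˢ C m) ∪ (C m ×ˢ W m) with hT
    set B : Finset (List (Fin (f 1))) :=
      (T ×ˢ ((Finset.range (2 ^ (m + 1) + 1)) ×ˢ (Finset.range (N + 1)))).image
        (fun p => ((p.1.1 ++ p.1.2).drop p.2.1).take p.2.2) with hB
    have hsub : {u : List (Fin (f 1)) | u.length ≤ N ∧ IsFactor u} ⊆ ↑B := by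
      rintro u ⟨hul, hufac⟩
      obtain ⟨w, hwS, k, hform⟩ := (fac_iff u).mp hufac
      set U : List (Fin (f 1)) := List.ofFn (fun i : Fin (2 ^ m) => w (k + ↑i)) with hU
      have hUlen : U.length = 2 ^ m := by simp [hU]
      have hUfac : IsFactor U := by
        refine (fac_iff U).mpr ⟨w, hwS, k, ?_⟩
        intro i hi
        rw [List.getD_eq_getElem _ _ hi]
        simp only [hU]
        rw [List.getElem_ofFn]
      have hpre : u <+: U := by
        have he : u = U.take u.length := by
          apply List.ext_getElem
          · simp only [List.length_take, hUlen]
            omega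
          · intro i h1 h2
            rw [List.getElem_take]
            have h3 := hform i h1
            rw [List.getD_eq_getElem _ _ h1] at h3
            rw [h3]
            simp only [hU]
            rw [List.getElem_ofFn]
        rw [he]
        exact List.take_prefix _ _
      obtain ⟨a, b, hab, hinf⟩ := hgranted m U hUfac hUlen
      have huinf : u <:+: a ++ b := hpre.isInfix.trans hinf
      obtain ⟨s, t, hst⟩ := huinf
      have habl : a.length = 2 ^ m ∧ b.length = 2 ^ m := by
        rcases hab with ⟨h1, h2⟩ | ⟨h1, h2⟩
        · exact ⟨hlenW m a h1, hlenC m b h2⟩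
        · exact ⟨hlenC m a h1, hlenW m b h2⟩
      have hud : ((a ++ b).drop s.length).take u.length = u := by
        rw [← hst, List.append_assoc, List.drop_left, List.take_left]
      have hsl : s.length ≤ 2 ^ (m + 1) := by
        have hlen := congrArg List.length hst
        simp only [List.length_append] at hlen
        rw [pow_succ]
        omega
      refine Finset.mem_coe.mpr (Finset.mem_image.mpr
        ⟨⟨(a, b), (s.length, u.length)⟩, ?_, hud⟩)
      simp only [Finset.mem_product, Finset.mem_range]
      refine ⟨?_, by omega, by omega⟩
      simp only [hT, Finset.mem_union, Finset.mem_product]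
      tauto
    have hcard : B.card ≤ 2 * ((W m).card * (C m).card) * ((2 ^ (m + 1) + 1) * (N + 1)) := by
      have hTc : T.card ≤ 2 * ((W m).card * (C m).card) := by
        rw [hT]
        have h1 := Finset.card_union_le (W m ×ˢ C m) (C m ×ˢ W m)
        rw [Finset.card_product, Finset.card_product] at h1
        have h2 : (C m).card * (W m).card = (W m).card * (C m).card := Nat.mul_comm _ _
        omega
      calc B.card ≤ (T ×ˢ ((Finset.range (2 ^ (m + 1) + 1)) ×ˢ (Finset.range (N + 1)))).card :=
            Finset.card_image_le
        _ = T.card * ((2 ^ (m + 1) + 1) * (N + 1)) := by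
            rw [Finset.card_product, Finset.card_product, Finset.card_range, Finset.card_range]
        _ ≤ 2 * ((W m).card * (C m).card) * ((2 ^ (m + 1) + 1) * (N + 1)) :=
            Nat.mul_le_mul_right _ hTc
    refine ⟨Set.Finite.subset B.finite_toSet hsub, ?_⟩
    rw [hh N]
    calc Set.ncard {u : List (Fin (f 1)) | u.length ≤ N ∧ IsFactor u}
        ≤ (↑B : Set (List (Fin (f 1)))).ncard := Set.ncard_le_ncard hsub B.finite_toSet
      _ = B.card := Set.ncard_coe_finset B
      _ ≤ 2 * ((W m).card * (C m).card) * ((2 ^ (m + 1) + 1) * (N + 1)) := hcard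
  -- assemble
  refine ⟨80, 4, by norm_num, by norm_num, ?_, ?_⟩
  · intro n hn
    set m := Nat.clog 2 n with hm
    have h1 : n ≤ 2 ^ m := Nat.le_pow_clog (by norm_num) n
    have h2 : 2 ^ m ≤ 2 * n := stmt8_clog_le n hn
    have h4 : 2 ^ (m + 1) ≤ 4 * n := by rw [pow_succ]; omega
    constructor
    · -- lower bound
      have hWfac : ↑(W m) ⊆ {u : List (Fin (f 1)) | u.length ≤ 2 * n ∧ IsFactor u} := by
        intro v hv
        have hv' : v ∈ W m := Finset.mem_coe.mp hv
        exact ⟨by rw [hlenW m v hv']; omega, factor_W m v hv'⟩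
      have hfin := (key (2 * n) (by omega)).1
      calc f n ≤ f (2 ^ m) := hfmono h1
        _ ≤ (W m).card := cardW_lb m
        _ = (↑(W m) : Set (List (Fin (f 1)))).ncard := (Set.ncard_coe_finset _).symm
        _ ≤ Set.ncard {u : List (Fin (f 1)) | u.length ≤ 2 * n ∧ IsFactor u} :=
            Set.ncard_le_ncard hWfac hfin
        _ = h (2 * n) := (hh (2 * n)).symm
    · -- upper bound, general case
      have hk := (key n hn).2
      rw [← hm] at hk
      have hWC : (W m).card * (C m).card ≤ 4 * n * f (4 * n) := by
        calc (W m).card * (C m).card ≤ (2 ^ m * f (2 ^ m)) * (C m).card :=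
              Nat.mul_le_mul_right _ (cardW_ub m)
          _ = 2 ^ m * (f (2 ^ m) * (C m).card) := by ring
          _ ≤ 2 ^ m * (2 * f (2 ^ (m + 1))) := Nat.mul_le_mul_left _ (hC_ub m)
          _ ≤ (2 * n) * (2 * f (4 * n)) :=
              Nat.mul_le_mul h2 (Nat.mul_le_mul_left _ (hfmono h4))
          _ = 4 * n * f (4 * n) := by ring
      calc h n ≤ 2 * ((W m).card * (C m).card) * ((2 ^ (m + 1) + 1) * (n + 1)) := hk
        _ ≤ 2 * (4 * n * f (4 * n)) * ((4 * n + 1) * (2 * n)) :=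
            Nat.mul_le_mul (Nat.mul_le_mul_left _ hWC)
              (Nat.mul_le_mul (by omega) (by omega))
        _ ≤ 2 * (4 * n * f (4 * n)) * ((5 * n) * (2 * n)) :=
            Nat.mul_le_mul_left _ (Nat.mul_le_mul_right _ (by omega))
        _ = 80 * n ^ 3 * f (4 * n) := by ring
  · intro hdvd n hn
    set m := Nat.clog 2 n with hm
    have h1 : n ≤ 2 ^ m := Nat.le_pow_clog (by norm_num) n
    have h2 : 2 ^ m ≤ 2 * n := stmt8_clog_le n hn
    have h4 : 2 ^ (m + 1) ≤ 4 * n := by rw [pow_succ]; omega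
    have hk := (key n hn).2
    rw [← hm] at hk
    have hWC : (W m).card * (C m).card ≤ f (4 * n) := by
      calc (W m).card * (C m).card = (W (m + 1)).card := (cardW_succ m).symm
        _ = f (2 ^ (m + 1)) := cardW_div hdvd (m + 1)
        _ ≤ f (4 * n) := hfmono h4
    calc h n ≤ 2 * ((W m).card * (C m).card) * ((2 ^ (m + 1) + 1) * (n + 1)) := hk
      _ ≤ 2 * f (4 * n) * ((4 * n + 1) * (2 * n)) :=
          Nat.mul_le_mul (Nat.mul_le_mul_left _ hWC)
            (Nat.mul_le_mul (by omega) (by omega))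
      _ ≤ 2 * f (4 * n) * ((5 * n) * (2 * n)) :=
          Nat.mul_le_mul_left _ (Nat.mul_le_mul_right _ (by omega))
      _ = 20 * n ^ 2 * f (4 * n) := by ring
      _ ≤ 80 * n ^ 2 * f (4 * n) := Nat.mul_le_mul_right _ (by nlinarith)
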